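/- Let X be a Tychonoff (completely regular Hausdorff) topological space of cardinality λ and U an open subset of X. Then there is an open cover {V_α : α < λ} of U and a cover {S_{α,m} : α < λ, m ∈ ℕ} of U by sets closed in X such that (a) S_{α,m} ⊆ V_α ⊆ U for all α, m, and (b) if α > β then S_{α,m} ∩ V_β = ∅ for all m. -/

import Mathlib

open Set unitInterval

theorem michael_rudin_lemma_32 {X : Type u} [TopologicalSpace X] [T35Space X]
    (U : Set X) (hU : IsOpen U) :
    ∃ (V : Ordinal.{u} → Set X) (S : Ordinal.{u} → ℕ → Set X),
      (∀ α < (Cardinal.mk X).ord, IsOpen (V α)) ∧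
      (⋃ (α : Ordinal.{u}) (_ : α < (Cardinal.mk X).ord), V α) = U ∧
      (⋃ (α : Ordinal.{u}) (_ : α < (Cardinal.mk X).ord), ⋃ m : ℕ, S α m) = U ∧
      (∀ α < (Cardinal.mk X).ord, ∀ m : ℕ, IsClosed (S α m) ∧ S α m ⊆ V α ∧ V α ⊆ U) ∧
      (∀ α β : Ordinal.{u}, α < (Cardinal.mk X).ord → β < α → ∀ m : ℕ, S α m ∩ V β = ∅) := by
  classical
  set κ := (Cardinal.mk X).ord with hκ
  -- enumeration of X by ordinals below κ
  have hcard : Cardinal.mk κ.ToType = Cardinal.mk X := by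
    rw [Cardinal.mk_toType, hκ, Cardinal.card_ord]
  obtain ⟨ψ⟩ := Cardinal.eq.mp hcard
  let e : Set.Iio κ → X := fun a => ψ ((Ordinal.ToType.mk (o := κ)) a)
  have he_surj : Function.Surjective e := by
    intro x
    exact ⟨(Ordinal.ToType.mk (o := κ)).symm (ψ.symm x), by simp [e]⟩
  -- separating functions
  have hsep : ∀ x ∈ U, ∃ f : X → I, Continuous f ∧ f x = 0 ∧ Set.EqOn f 1 Uᶜ := by
    intro x hx
    exact CompletelyRegularSpace.completely_regular x Uᶜ hU.isClosed_compl
      (by simpa using hx)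
  choose! f hfc hfx hfK using hsep
  -- the basic open sets
  let W : Ordinal.{u} → Set X :=
    fun α => if h : ∃ ha : α < κ, e ⟨α, ha⟩ ∈ U then
      {y | (f (e ⟨α, h.1⟩) y : ℝ) < 1} else ∅
  have hWopen : ∀ α, IsOpen (W α) := by
    intro α
    simp only [W]
    split
    · next h =>
      exact isOpen_lt (by exact_mod_cast ((hfc _ h.2).subtype_val)) continuous_const
    · exact isOpen_empty
  have hWU : ∀ α, W α ⊆ U := by
    intro α y hy
    simp only [W] at hy
    split at hy
    · next h =>
      simp only [mem_setOf_eq] at hy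
      by_contra hyU
      have := hfK _ h.2 (by simpa using hyU)
      simp only [Pi.one_apply] at this
      rw [this] at hy
      simp at hy
    · exact absurd hy (notMem_empty y)
  -- closed pieces
  let C : Ordinal.{u} → ℕ → Set X :=
    fun α m => if h : ∃ ha : α < κ, e ⟨α, ha⟩ ∈ U then
      {y | (f (e ⟨α, h.1⟩) y : ℝ) ≤ 1 - 1 / (m + 1)} else ∅
  have hCclosed : ∀ α m, IsClosed (C α m) := by
    intro α m
    simp only [C]
    split
    · next h =>
      exact isClosed_le (by exact_mod_cast ((hfc _ h.2).subtype_val)) continuous_const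
    · exact isClosed_empty
  have hCW : ∀ α m, C α m ⊆ W α := by
    intro α m y hy
    simp only [C] at hy
    split at hy
    · next h =>
      simp only [W, dif_pos h, mem_setOf_eq] at *
      have : (0:ℝ) < 1 / (m + 1) := by positivity
      linarith
    · exact absurd hy (notMem_empty y)
  have hmemC : ∀ (α : Ordinal.{u}) (h : ∃ ha : α < κ, e ⟨α, ha⟩ ∈ U),
      e ⟨α, h.1⟩ ∈ C α 0 := by
    intro α h
    simp only [C, dif_pos h, mem_setOf_eq, hfx _ h.2]
    norm_num
  have hWC : ∀ α, ∀ y ∈ W α, ∃ m, y ∈ C α m := by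
    intro α y hy
    simp only [W] at hy
    split at hy
    · next h =>
      simp only [mem_setOf_eq] at hy
      obtain ⟨m, hm⟩ := exists_nat_one_div_lt (show (0:ℝ) < 1 - f (e ⟨α, h.1⟩) y by linarith)
      refine ⟨m, ?_⟩
      simp only [C, dif_pos h, mem_setOf_eq]
      linarith
    · exact absurd hy (notMem_empty y)
  have hWκ : ∀ α, W α ≠ ∅ → α < κ := by
    intro α hα
    by_contra hlt
    apply hα
    simp only [W]
    rw [dif_neg]
    rintro ⟨ha, -⟩
    exact hlt ha
  -- definitions
  refine ⟨W, fun α m => C α m \ ⋃ β ∈ Set.Iio α, W β, fun α _ => hWopen α, ?_, ?_, ?_, ?_⟩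
  · apply subset_antisymm
    · exact iUnion_subset fun α => iUnion_subset fun _ => hWU α
    · intro x hx
      obtain ⟨⟨α, hα⟩, rfl⟩ := he_surj x
      have h : ∃ ha : α < κ, e ⟨α, ha⟩ ∈ U := ⟨hα, hx⟩
      exact mem_iUnion.mpr ⟨α, mem_iUnion.mpr ⟨hα, hCW α 0 (hmemC α h)⟩⟩
  · apply subset_antisymm
    · refine iUnion_subset fun α => iUnion_subset fun _ => iUnion_subset fun m => ?_
      exact (diff_subset.trans (hCW α m)).trans (hWU α)
    · intro x hx
      obtain ⟨⟨α₀, hα₀⟩, rfl⟩ := he_surj x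
      set x := e ⟨α₀, hα₀⟩
      have hA : (setOf fun α => x ∈ W α).Nonempty :=
        ⟨α₀, hCW α₀ 0 (hmemC α₀ ⟨hα₀, hx⟩)⟩
      obtain ⟨α, hαA, hmin⟩ := Ordinal.lt_wf.has_min _ hA
      obtain ⟨m, hm⟩ := hWC α x hαA
      have hακ : α < κ := hWκ α (Set.nonempty_of_mem (show x ∈ W α from hαA)).ne_empty
      refine mem_iUnion.mpr ⟨α, mem_iUnion.mpr ⟨hακ, mem_iUnion.mpr ⟨m, hm, ?_⟩⟩⟩
      simp only [mem_iUnion, not_exists]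
      intro β hβ hxβ
      exact hmin β hxβ hβ
  · intro α hα m
    exact ⟨(hCclosed α m).sdiff (isOpen_biUnion fun β _ => hWopen β),
      diff_subset.trans (hCW α m), hWU α⟩
  · intro α β hα hβα m
    rw [Set.eq_empty_iff_forall_notMem]
    rintro x ⟨⟨-, hx2⟩, hxβ⟩
    simp only [mem_iUnion, not_exists] at hx2
    exact hx2 β hβα hxβ
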